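/- Suppose F∞ = 0 and let h be a profile of maximal height h_max > H₀ and speed c ≠ 0. Then the speed is determined up to sign by the maximal height: c² = g·h_max + (h_max·(h_max + 2H₀)/H₀³)·E∞. -/

import Mathlib

open Filter

/-- Antiderivative appearing in the first integral of the profile ODE. -/
noncomputable def Fphi (g H₀ c Einf : ℝ) (s : ℝ) : ℝ :=
  (c^2*H₀^5 - 2*c^2*H₀^4*s - g*H₀^3*s^3 - g*H₀^5*s - Einf*s^4 - 2*Einf*H₀^3*s)
    / (2*H₀^3*s^2)

set_option maxHeartbeats 1000000 in
lemma Fphi_hasDerivAt (g H₀ c Einf : ℝ) (hH : H₀ ≠ 0) (s : ℝ) (hs : s ≠ 0) :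
    HasDerivAt (Fphi g H₀ c Einf)
      (c^2*H₀/s^2 - c^2*H₀^2/s^3 - g/2 + g*H₀^2/(2*s^2) - Einf*s/H₀^3 + Einf/s^2) s := by
  have h1 : HasDerivAt (fun t:ℝ => t) 1 s := hasDerivAt_id s
  have h3 : HasDerivAt (fun t:ℝ => t^3) (3*s^2) s := by simpa using hasDerivAt_pow 3 s
  have h4 : HasDerivAt (fun t:ℝ => t^4) (4*s^3) s := by simpa using hasDerivAt_pow 4 s
  have hN : HasDerivAt (fun t:ℝ =>
      c^2*H₀^5 - 2*c^2*H₀^4*t - g*H₀^3*t^3 - g*H₀^5*t - Einf*t^4 - 2*Einf*H₀^3*t)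
      (0 - 2*c^2*H₀^4*1 - g*H₀^3*(3*s^2) - g*H₀^5*1 - Einf*(4*s^3) - 2*Einf*H₀^3*1) s :=
    (((((hasDerivAt_const s (c^2*H₀^5)).sub (h1.const_mul (2*c^2*H₀^4))).sub
      (h3.const_mul (g*H₀^3))).sub (h1.const_mul (g*H₀^5))).sub
      (h4.const_mul Einf)).sub (h1.const_mul (2*Einf*H₀^3))
  have hden : HasDerivAt (fun t:ℝ => 2*H₀^3*t^2) (2*H₀^3*(2*s)) s := by
    simpa using (hasDerivAt_pow 2 s).const_mul (2*H₀^3)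
  have hdne : 2*H₀^3*s^2 ≠ 0 := by positivity
  have := hN.div hden hdne
  refine (this : HasDerivAt (Fphi g H₀ c Einf) _ s).congr_deriv ?_
  field_simp
  ring

set_option maxHeartbeats 1000000 in
lemma deriv_alg (g H₀ c vs Einf s u v : ℝ) (hs : s ≠ 0) (hH : H₀ ≠ 0)
    (key : 1/3*c*(c*H₀^2 - vs*s^2)*v =
      (s - H₀)/(2*s)*(2*c^2*H₀ - g*s*(s+H₀)) - (s^3/H₀^3 - 1)*Einf
        + c^2/3*H₀^2*u^2/s) :
    (0:ℝ) = c/6*((0*s^2 - c*H₀^2*(2*s^(2-1)*u))/(s^2)^2)*u^2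
      + c/6*(c*H₀^2/s^2 - vs)*(2*u^(2-1)*v)
      - (c^2*H₀/s^2 - c^2*H₀^2/s^3 - g/2 + g*H₀^2/(2*s^2) - Einf*s/H₀^3 + Einf/s^2)*u := by
  field_simp at key ⊢
  linear_combination (-2*s*u) * key

set_option maxHeartbeats 1000000 in
lemma final_alg (g H₀ c Einf m : ℝ) (hH : 0 < H₀) (hm : H₀ < m)
    (heq : Fphi g H₀ c Einf m = Fphi g H₀ c Einf H₀) :
    c ^ 2 = g * m + (m * (m + 2 * H₀) / H₀ ^ 3) * Einf := by
  have hm0 : (0:ℝ) < m := lt_trans hH hm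
  have hdiffF : Fphi g H₀ c Einf m - Fphi g H₀ c Einf H₀ =
      (m - H₀)^2/(2*m^2) * (c^2 - g*m - m*(m+2*H₀)/H₀^3 * Einf) := by
    unfold Fphi
    field_simp
    ring
  rw [heq, sub_self] at hdiffF
  have hfac : (m - H₀)^2/(2*m^2) ≠ 0 := by
    have : m - H₀ ≠ 0 := sub_ne_zero.mpr (ne_of_gt hm)
    positivity
  rcases mul_eq_zero.mp hdiffF.symm with h' | h'
  · exact absurd h' hfac
  · linarith

set_option maxHeartbeats 1000000 in
/-- When `F∞ = 0`, the speed of a solitary wave of maximal height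
`hmax` is determined up to sign by the maximal height. -/
theorem speed_determined_by_maximal_height
    (g H₀ c vs Einf Finf hmax : ℝ) (hg : 0 < g) (hH : 0 < H₀) (hc : c ≠ 0)
    (hE : 0 < Einf) (hF : Finf = 0) (hmax_gt : H₀ < hmax)
    (h : ℝ → ℝ) (hC2 : ContDiff ℝ 2 h) (hpos : ∀ x, 0 < h x)
    (hode : ∀ x, (1/3) * c * (c * H₀ ^ 2 - vs * (h x) ^ 2) * deriv (deriv h) x =
      ((h x - H₀) / (2 * h x)) * (2 * c ^ 2 * H₀ - g * h x * (h x + H₀))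
        - ((h x) ^ 3 / H₀ ^ 3 - 1) * Einf
        - 2 * (Finf / c) * (((h x) ^ 2 - H₀ ^ 2) * (h x) ^ 3 / H₀ ^ 5)
        + (c ^ 2 / 3) * H₀ ^ 2 * (deriv h x) ^ 2 / h x)
    (htop : Tendsto h atTop (nhds H₀)) (hbot : Tendsto h atBot (nhds H₀))
    (htop' : Tendsto (deriv h) atTop (nhds 0))
    (hbot' : Tendsto (deriv h) atBot (nhds 0))
    (hle : ∀ x, h x ≤ hmax) (hatt : ∃ x, h x = hmax) :
    c ^ 2 = g * hmax + (hmax * (hmax + 2 * H₀) / H₀ ^ 3) * Einf := by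
  subst hF
  have hHne : H₀ ≠ 0 := hH.ne'
  have hdiff : Differentiable ℝ h := hC2.differentiable (by norm_num)
  have h2 : ContDiff ℝ ((1:ℕ)+1 : ℕ∞) h := by norm_num; exact hC2
  have hdiff' : Differentiable ℝ (deriv h) :=
    (contDiff_succ_iff_deriv (n := 1) |>.mp (by simpa using h2)).2.2.differentiable (by simp)
  set P : ℝ → ℝ := fun x =>
    (c/6) * (c*H₀^2/(h x)^2 - vs) * (deriv h x)^2 - Fphi g H₀ c Einf (h x) with hPdef
  -- P has derivative 0 everywhere
  have hPder : ∀ x, HasDerivAt P 0 x := by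
    intro x
    have hs : h x ≠ 0 := (hpos x).ne'
    have hdh : HasDerivAt h (deriv h x) x := (hdiff x).hasDerivAt
    have hdu : HasDerivAt (deriv h) (deriv (deriv h) x) x := (hdiff' x).hasDerivAt
    have hs2 : (h x)^2 ≠ 0 := pow_ne_zero 2 hs
    have hA : HasDerivAt (fun y => c*H₀^2/(h y)^2 - vs)
        ((0*(h x)^2 - c*H₀^2*(2*(h x)^(2-1)*deriv h x))/((h x)^2)^2) x :=
      ((hasDerivAt_const x (c*H₀^2)).div (hdh.pow 2) hs2).sub_const vs
    have hB := hA.const_mul (c/6)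
    have hu2 : HasDerivAt (fun y => (deriv h y)^2)
        (2*(deriv h x)^(2-1)*deriv (deriv h) x) x := hdu.pow 2
    have hprod := hB.mul hu2
    have hcomp : HasDerivAt (fun y => Fphi g H₀ c Einf (h y))
        ((c^2*H₀/(h x)^2 - c^2*H₀^2/(h x)^3 - g/2 + g*H₀^2/(2*(h x)^2)
          - Einf*(h x)/H₀^3 + Einf/(h x)^2) * deriv h x) x :=
      (Fphi_hasDerivAt g H₀ c Einf hHne (h x) hs).comp x hdh
    have htot := hprod.sub hcomp
    refine htot.congr_deriv ?_
    have key := hode x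
    simp only [zero_div, mul_zero, zero_mul, sub_zero] at key
    have key' : 1/3*c*(c*H₀^2 - vs*(h x)^2)*deriv (deriv h) x =
        (h x - H₀)/(2*(h x))*(2*c^2*H₀ - g*(h x)*(h x + H₀)) - ((h x)^3/H₀^3 - 1)*Einf
          + c^2/3*H₀^2*(deriv h x)^2/(h x) := by
      linarith [key]
    exact (deriv_alg g H₀ c vs Einf (h x) (deriv h x) (deriv (deriv h) x) hs hHne key').symm
  have hPdiffble : Differentiable ℝ P := fun x => (hPder x).differentiableAt
  have hPconst : ∀ x y, P x = P y :=
    is_const_of_deriv_eq_zero hPdiffble (fun x => (hPder x).deriv)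
  obtain ⟨x₀, hx₀⟩ := hatt
  have hmx : IsLocalMax h x₀ :=
    Filter.Eventually.of_forall (fun y => by rw [hx₀]; exact hle y)
  have hd0 : deriv h x₀ = 0 := hmx.deriv_eq_zero
  -- limit of P at +∞
  have t1 : Tendsto (fun x => c*H₀^2/(h x)^2) atTop (nhds (c*H₀^2/H₀^2)) :=
    tendsto_const_nhds.div (htop.pow 2) (pow_ne_zero 2 hHne)
  have t3 : Tendsto (fun x => (c/6) * (c*H₀^2/(h x)^2 - vs)) atTop
      (nhds ((c/6) * (c*H₀^2/H₀^2 - vs))) := ((t1.sub_const vs).const_mul (c/6))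
  have t4 : Tendsto (fun x => (deriv h x)^2) atTop (nhds ((0:ℝ)^2)) := htop'.pow 2
  have t6 : Tendsto (fun x => Fphi g H₀ c Einf (h x)) atTop
      (nhds (Fphi g H₀ c Einf H₀)) :=
    ((Fphi_hasDerivAt g H₀ c Einf hHne H₀ hHne).continuousAt.tendsto).comp htop
  have tend : Tendsto P atTop
      (nhds ((c/6) * (c*H₀^2/H₀^2 - vs) * (0:ℝ)^2 - Fphi g H₀ c Einf H₀)) :=
    (t3.mul t4).sub t6
  have tconst : Tendsto P atTop (nhds (P x₀)) := by
    have hPfun : P = fun _ => P x₀ := funext fun y => hPconst y x₀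
    rw [hPfun]; exact tendsto_const_nhds
  have hPval : P x₀ = (c/6) * (c*H₀^2/H₀^2 - vs) * (0:ℝ)^2 - Fphi g H₀ c Einf H₀ :=
    tendsto_nhds_unique tconst tend
  have e1 : P x₀ = -(Fphi g H₀ c Einf hmax) := by
    simp only [hPdef, hx₀, hd0]; ring
  have hFeq : Fphi g H₀ c Einf hmax = Fphi g H₀ c Einf H₀ := by
    rw [e1] at hPval
    nlinarith [hPval]
  exact final_alg g H₀ c Einf hmax hH hmax_gt hFeq
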